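/- With the construction below, let P be a maximal two-sided ideal of B such that B/P is finite-dimensional over F and A_0 ⊄ P. Then there exist n ∈ S and 1 ≤ i ≤ a_n such that P is the kernel of the restriction of θ_{n,i} to B; in particular B/P ≅ M_n(F). -/

import Mathlib

open Matrix

/-- The `n×n` cyclic permutation matrix: identity block `I_{n-1}` in the upper right and
a `1` in the lower-left corner. -/
def cycMat (F : Type*) [Semiring F] (n : ℕ) : Matrix (Fin n) (Fin n) F :=
  Matrix.of fun k l => if (l : ℕ) = ((k : ℕ) + 1) % n then 1 else 0

/-- The matrix unit `E₁₁`, with `1` in the upper-left entry and zeros elsewhere. -/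
def e11 (F : Type*) [Semiring F] (n : ℕ) : Matrix (Fin n) (Fin n) F :=
  Matrix.of fun k l => if (k : ℕ) = 0 ∧ (l : ℕ) = 0 then 1 else 0

/-- Index set: pairs `(n, i)` with `n ≥ 2` and `1 ≤ i ≤ a n` (here `0`-indexed: `i < a n`).
Note that `n` lies in the support `S` of `a` automatically, since `i < a n` forces `a n ≠ 0`. -/
abbrev Idx (a : ℕ → ℕ) : Type := {p : ℕ × ℕ // 2 ≤ p.1 ∧ p.2 < a p.1}

/-- The ambient algebra `A = ∏_{n ∈ S} ∏_{i=1}^{a n} M_n(F)`. -/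
abbrev ConstrA (F : Type*) [Field F] (a : ℕ → ℕ) : Type _ :=
  ∀ p : Idx a, Matrix (Fin p.1.1) (Fin p.1.1) F

/-- The element `e` whose `(n,i)` component is `λ_{n,i} • E₁₁`. -/
def elemE {F : Type*} [Field F] (a : ℕ → ℕ) (lam : Idx a → F) : ConstrA F a :=
  fun p => lam p • e11 F p.1.1

/-- The element `σ` whose `(n,i)` component is the cyclic permutation matrix `P_n`. -/
def elemS (F : Type*) [Field F] (a : ℕ → ℕ) : ConstrA F a :=
  fun p => cycMat F p.1.1
/-- `B = F⟨e, σ⟩`, the unital `F`-subalgebra of `A` generated by `e` and `σ`. -/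
abbrev ConstrB (F : Type*) [Field F] (a : ℕ → ℕ) (lam : Idx a → F) :
    Subalgebra F (ConstrA F a) :=
  Algebra.adjoin F {elemE a lam, elemS F a}

set_option maxHeartbeats 1000000
set_option synthInstance.maxHeartbeats 400000

section MatrixAux

variable {F : Type*} [Field F]

lemma e11_apply' (n : ℕ) (hn : 0 < n) (x y : Fin n) :
    e11 F n x y = if x = ⟨0, hn⟩ then (if y = ⟨0, hn⟩ then (1:F) else 0) else 0 := by
  simp only [e11, Matrix.of_apply, Fin.ext_iff]
  by_cases hx : (x:ℕ) = 0 <;> by_cases hy : (y:ℕ) = 0 <;> simp [hx, hy]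

lemma mul_e11_mul (n : ℕ) (hn : 0 < n) (M N : Matrix (Fin n) (Fin n) F) (u v : Fin n) :
    (M * e11 F n * N) u v = M u ⟨0, hn⟩ * N ⟨0, hn⟩ v := by
  rw [Matrix.mul_apply]
  have h : ∀ y, (M * e11 F n) u y = if y = ⟨0, hn⟩ then M u ⟨0, hn⟩ else 0 := by
    intro y
    rw [Matrix.mul_apply]
    simp only [e11_apply' n hn, mul_ite, mul_one, mul_zero]
    by_cases hy : y = ⟨0, hn⟩ <;> simp [hy]
  simp only [h, ite_mul, zero_mul]
  simp

lemma cycMat_pow_apply (n s : ℕ) (k : Fin n) : ∀ l : Fin n,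
    ((cycMat F n) ^ s) k l = if (l : ℕ) = ((k : ℕ) + s) % n then 1 else 0 := by
  have hn : 0 < n := k.pos
  induction s with
  | zero =>
    intro l
    simp only [pow_zero, Matrix.one_apply, Nat.add_zero, Nat.mod_eq_of_lt k.isLt]
    by_cases h : k = l
    · simp [h]
    · have h2 : (l:ℕ) ≠ (k:ℕ) := fun hh => h (Fin.ext hh.symm)
      simp [h, h2]
  | succ s ih =>
    intro l
    rw [pow_succ, Matrix.mul_apply]
    rw [Finset.sum_eq_single (⟨((k:ℕ) + s) % n, Nat.mod_lt _ hn⟩ : Fin n)]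
    · rw [ih]
      simp only [if_pos rfl, one_mul, cycMat, Matrix.of_apply]
      simp [Nat.mod_add_mod, Nat.add_assoc]
    · intro b _ hb
      rw [ih]
      have : (b:ℕ) ≠ ((k:ℕ) + s) % n := fun hh => hb (Fin.ext hh)
      simp [this]
    · intro h; exact absurd (Finset.mem_univ _) h

lemma cyc_e11_cyc (n : ℕ) (hn : 0 < n) (j k : Fin n) :
    (cycMat F n) ^ (n - (j:ℕ)) * e11 F n * (cycMat F n) ^ (k:ℕ)
      = Matrix.single j k (1:F) := by
  ext u v
  rw [mul_e11_mul n hn, cycMat_pow_apply, cycMat_pow_apply]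
  have h1 : (((⟨0,hn⟩ : Fin n)):ℕ) = 0 := rfl
  have hu := u.isLt; have hj := j.isLt
  have key : ((u:ℕ) + (n - (j:ℕ))) % n = 0 ↔ (u:ℕ) = (j:ℕ) := by
    rcases Nat.lt_or_ge ((u:ℕ) + (n - (j:ℕ))) n with hlt | hge
    · rw [Nat.mod_eq_of_lt hlt]; omega
    · rw [Nat.mod_eq_sub_mod hge, Nat.mod_eq_of_lt (by omega)]; omega
  have hcond1 : ((((⟨0,hn⟩ : Fin n)):ℕ) = ((u:ℕ) + (n - (j:ℕ))) % n) = (u = j) := by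
    apply propext
    rw [h1, Fin.ext_iff]
    exact ⟨fun h => key.mp h.symm, fun h => (key.mpr h).symm⟩
  have hcond2 : (((v:ℕ) = ((((⟨0,hn⟩ : Fin n)):ℕ) + (k:ℕ)) % n)) = (v = k) := by
    rw [h1, Nat.zero_add, Nat.mod_eq_of_lt k.isLt, Fin.ext_iff]
  simp only [hcond1, hcond2]
  simp only [Matrix.single, Matrix.of_apply]
  by_cases h2 : u = j <;> by_cases h3 : v = k
  · subst h2; subst h3; simp
  · subst h2; have h4 : ¬(k = v) := fun hh => h3 hh.symm; simp [h3, h4]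
  · subst h3; have h4 : ¬(j = u) := fun hh => h2 hh.symm; simp [h2, h4]
  · have h4 : ¬(j = u) := fun hh => h2 hh.symm; simp [h2, h3, h4]

lemma e11_mul_mul (n : ℕ) (hn : 0 < n) (C : Matrix (Fin n) (Fin n) F) :
    e11 F n * C * e11 F n = C ⟨0,hn⟩ ⟨0,hn⟩ • e11 F n := by
  have h2 : e11 F n * C * e11 F n = e11 F n * C * e11 F n * 1 := (mul_one _).symm
  have h3 : e11 F n * C = 1 * e11 F n * C := by rw [one_mul]
  ext u v
  rw [h2, mul_e11_mul n hn, h3, mul_e11_mul n hn]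
  simp only [Matrix.one_apply, Matrix.smul_apply, e11_apply' n hn, smul_eq_mul]
  by_cases h4 : u = ⟨0,hn⟩ <;> by_cases h5 : v = ⟨0,hn⟩
  · simp [h4, h5]
  · simp only [h4, if_true, if_pos rfl]
    simp [h5]
    exact fun hh => absurd hh.symm h5
  · simp [h4, h5]
  · simp [h4, h5]

lemma e11_sq (n : ℕ) (hn : 0 < n) : e11 F n * e11 F n = e11 F n := by
  have h := e11_mul_mul n hn (1 : Matrix (Fin n) (Fin n) F)
  rw [mul_one, Matrix.one_apply_eq, one_smul] at h
  exact h

lemma e11_pow (n : ℕ) (hn : 0 < n) (k : ℕ) : (e11 F n) ^ (k + 1) = e11 F n := by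
  induction k with
  | zero => rw [pow_one]
  | succ k ih => rw [pow_succ, ih, e11_sq n hn]

lemma sum_std_diag (n : ℕ) : ∑ j : Fin n, Matrix.single j j (1:F) = 1 := by
  ext u v
  rw [Matrix.sum_apply]
  by_cases h : u = v
  · subst h
    rw [Matrix.one_apply_eq, Finset.sum_eq_single u]
    · simp [Matrix.single]
    · intro b _ hb
      simp [Matrix.single, fun hh : b = u => hb hh]
    · intro h; exact absurd (Finset.mem_univ _) h
  · rw [Matrix.one_apply_ne h, Finset.sum_eq_zero]
    intro j _
    simp only [Matrix.single, Matrix.of_apply, ite_eq_right_iff, and_imp]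
    intro h1 h2
    exact absurd (h1.symm.trans h2) h

lemma std_apply' (n : ℕ) (i j : Fin n) (γ : F) (x y : Fin n) :
    Matrix.single i j γ x y = if x = i ∧ y = j then γ else 0 := by
  simp only [Matrix.single, Matrix.of_apply]
  by_cases h1 : x = i <;> by_cases h2 : y = j
  · simp [h1, h2]
  · simp only [h1, h2, and_false, if_false, if_true, true_and]
    simp
    exact fun hh => absurd hh.symm h2
  · simp only [h1, h2, false_and, if_false, and_true]
    simp
    exact fun hh => absurd hh.symm h1
  · simp only [h1, h2, false_and, if_false]
    simp
    exact fun hh => absurd hh.symm h1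

lemma std_mul_mul (n : ℕ) (M : Matrix (Fin n) (Fin n) F) (k u v l : Fin n) (α β : F) :
    Matrix.single k u α * M * Matrix.single v l β = Matrix.single k l (α * M u v * β) := by
  ext r s
  rw [Matrix.mul_apply]
  have hrow : ∀ y, (Matrix.single k u α * M) r y = if r = k then α * M u y else 0 := by
    intro y
    rw [Matrix.mul_apply]
    rw [Finset.sum_eq_single u]
    · rw [std_apply']
      by_cases h1 : r = k <;> simp [h1]
    · intro b _ hb
      rw [std_apply']
      simp [hb]
    · intro h; exact absurd (Finset.mem_univ _) h
  simp only [hrow, std_apply']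
  rw [Finset.sum_eq_single v]
  · by_cases h1 : r = k <;> by_cases h2 : s = l
    · simp [h1, h2]
    · simp [h1, h2]
    · simp [h1, h2]
    · simp [h1, h2]
  · intro b _ hb
    simp [hb]
  · intro h; exact absurd (Finset.mem_univ _) h

lemma aeval_smul_e11 (n : ℕ) (hn : 0 < n) (μ : F) (q : Polynomial F) :
    Polynomial.aeval (μ • e11 F n) (Polynomial.X * q) = (μ * q.eval μ) • e11 F n := by
  induction q using Polynomial.induction_on' with
  | add p q hp hq =>
    rw [mul_add, map_add, hp, hq, Polynomial.eval_add, ← add_smul, mul_add]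
  | monomial k c =>
    rw [Polynomial.X_mul_monomial, Polynomial.aeval_monomial, smul_pow, e11_pow n hn,
      Polynomial.eval_monomial, Algebra.algebraMap_eq_smul_one]
    rw [smul_mul_assoc, one_mul, smul_smul]
    congr 1
    ring

lemma adjoin_e11_cyc_top (n : ℕ) (hn : 0 < n) {c : F} (hc : c ≠ 0) :
    Algebra.adjoin F {c • e11 F n, cycMat F n} = ⊤ := by
  rw [eq_top_iff]
  intro M _
  have h1 : c • e11 F n ∈ Algebra.adjoin F {c • e11 F n, cycMat F n} :=
    Algebra.subset_adjoin (Set.mem_insert _ _)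
  have h2 : cycMat F n ∈ Algebra.adjoin F {c • e11 F n, cycMat F n} :=
    Algebra.subset_adjoin (Set.mem_insert_of_mem _ rfl)
  have h3 : e11 F n ∈ Algebra.adjoin F {c • e11 F n, cycMat F n} := by
    have := Subalgebra.smul_mem _ h1 c⁻¹
    rwa [smul_smul, inv_mul_cancel₀ hc, one_smul] at this
  have hstd : ∀ j k : Fin n, Matrix.single j k (1:F)
      ∈ Algebra.adjoin F {c • e11 F n, cycMat F n} := by
    intro j k
    rw [← cyc_e11_cyc n hn j k]
    exact mul_mem (mul_mem (pow_mem h2 _) h3) (pow_mem h2 _)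
  rw [Matrix.matrix_eq_sum_single M]
  refine sum_mem fun i _ => sum_mem fun j _ => ?_
  have : Matrix.single i j (M i j) = (M i j) • Matrix.single i j (1:F) := by
    rw [Matrix.smul_single, smul_eq_mul, mul_one]
  rw [this]
  exact Subalgebra.smul_mem _ (hstd i j) _

end MatrixAux

section SingleMem

variable {F : Type*} [Field F]

lemma single_one_mem (a : ℕ → ℕ) (lam : Idx a → F)
    (hlam_ne : ∀ p, lam p ≠ 0)
    (hlam : ∀ p q : Idx a, p.1.1 = q.1.1 → p ≠ q → lam p ≠ lam q ∧ lam p ≠ -lam q)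
    (p : Idx a) : (Pi.single p 1 : ConstrA F a) ∈ ConstrB F a lam := by
  classical
  suffices H : ∀ n : ℕ, ∀ p : Idx a, p.1.1 = n →
      (Pi.single p 1 : ConstrA F a) ∈ ConstrB F a lam from H _ p rfl
  intro n
  induction n using Nat.strong_induction_on with
  | _ n IH =>
  intro p hpn
  subst hpn
  have hN2 : 2 ≤ p.1.1 := p.2.1
  have hN0 : 0 < p.1.1 := by omega
  have he : elemE a lam ∈ ConstrB F a lam := Algebra.subset_adjoin (Set.mem_insert _ _)
  have hs : elemS F a ∈ ConstrB F a lam := Algebra.subset_adjoin (Set.mem_insert_of_mem _ rfl)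
  set x : ConstrA F a := elemE a lam * elemS F a ^ p.1.1 * elemE a lam with hxdef
  have hxB : x ∈ ConstrB F a lam := mul_mem (mul_mem he (pow_mem hs _)) he
  have hx : ∀ r : Idx a, x r
      = if r.1.1 ∣ p.1.1 then ((lam r)^2 • e11 F r.1.1) else 0 := by
    intro r
    have hr0 : 0 < r.1.1 := by have := r.2.1; omega
    have hstep : x r = (lam r • e11 F r.1.1) * (cycMat F r.1.1 ^ p.1.1)
        * (lam r • e11 F r.1.1) := by
      rw [hxdef, Pi.mul_apply, Pi.mul_apply, Pi.pow_apply]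
      rfl
    rw [hstep, smul_mul_assoc, smul_mul_assoc, mul_smul_comm, smul_smul, ← pow_two]
    rw [e11_mul_mul _ hr0, cycMat_pow_apply]
    have hz : (((⟨0, hr0⟩ : Fin r.1.1)):ℕ) = 0 := rfl
    rw [hz, Nat.zero_add]
    by_cases hd : r.1.1 ∣ p.1.1
    · have hm : p.1.1 % r.1.1 = 0 := Nat.eq_zero_of_dvd_of_lt hd |> fun _ => Nat.mod_eq_zero_of_dvd hd
      rw [if_pos hd, hm, if_pos rfl, one_smul]
    · have hm : ¬ (0 : ℕ) = p.1.1 % r.1.1 := by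
        intro hh
        exact hd (Nat.dvd_of_mod_eq_zero hh.symm)
      rw [if_neg hd, if_neg hm, zero_smul, smul_zero]
  set D : Finset (Idx a) := Finset.subtype _
    (((p.1.1).divisors.erase p.1.1).biUnion fun m =>
      (Finset.range (a m)).image fun i => (m, i)) with hDdef
  have hD : ∀ q : Idx a, q ∈ D ↔ (q.1.1 ∣ p.1.1 ∧ q.1.1 ≠ p.1.1) := by
    intro q
    simp only [hDdef, Finset.mem_subtype, Finset.mem_biUnion, Finset.mem_erase,
      Nat.mem_divisors, Finset.mem_image, Finset.mem_range]
    constructor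
    · rintro ⟨m, ⟨hmne, hmd, -⟩, i, hi, hqe⟩
      have h1 : m = q.1.1 := by rw [← hqe]
      rw [h1] at hmd hmne
      exact ⟨hmd, hmne⟩
    · rintro ⟨hdvd, hne⟩
      exact ⟨q.1.1, ⟨hne, hdvd, by omega⟩, q.1.2, q.2.2, by simp⟩
  set Elow : ConstrA F a := ∑ q ∈ D, Pi.single q 1 with hEdef
  have hElowB : Elow ∈ ConstrB F a lam := by
    refine sum_mem fun q hq => ?_
    have h := (hD q).mp hq
    have hlt : q.1.1 < p.1.1 := Nat.lt_of_le_of_ne (Nat.le_of_dvd hN0 h.1) h.2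
    exact IH _ hlt q rfl
  have hElow : ∀ r : Idx a, Elow r = if r ∈ D then 1 else 0 := by
    intro r
    rw [hEdef, Finset.sum_apply]
    by_cases hr : r ∈ D
    · rw [Finset.sum_eq_single_of_mem r hr, Pi.single_eq_same, if_pos hr]
      intro q _ hne
      exact Pi.single_eq_of_ne (Ne.symm hne) _
    · rw [Finset.sum_eq_zero, if_neg hr]
      intro q hq
      exact Pi.single_eq_of_ne (fun h => hr (by rw [h]; exact hq)) _
  set y : ConstrA F a := x * (1 - Elow) with hydef
  have hyB : y ∈ ConstrB F a lam := mul_mem hxB (sub_mem (one_mem _) hElowB)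
  have hy : ∀ r : Idx a, y r
      = if r.1.1 = p.1.1 then ((lam r)^2 • e11 F r.1.1) else 0 := by
    intro r
    rw [hydef, Pi.mul_apply, Pi.sub_apply, Pi.one_apply, hElow, hx]
    by_cases h1 : r.1.1 = p.1.1
    · have hrD : r ∉ D := fun h => ((hD r).mp h).2 h1
      rw [if_pos h1, if_pos (h1 ▸ dvd_refl _), if_neg hrD, sub_zero, mul_one]
    · rw [if_neg h1]
      by_cases h2 : r.1.1 ∣ p.1.1
      · have hrD : r ∈ D := (hD r).mpr ⟨h2, h1⟩
        rw [if_pos h2, if_pos hrD, sub_self, mul_zero]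
      · rw [if_neg h2, zero_mul]
  set L : Finset (Idx a) := Finset.subtype _
    (((Finset.range (a p.1.1)).erase p.1.2).image fun i => (p.1.1, i)) with hLdef
  have hL : ∀ q : Idx a, q ∈ L ↔ (q.1.1 = p.1.1 ∧ q ≠ p) := by
    intro q
    simp only [hLdef, Finset.mem_subtype, Finset.mem_image, Finset.mem_erase, Finset.mem_range]
    constructor
    · rintro ⟨i, ⟨hip, hia⟩, hqe⟩
      have h1 : p.1.1 = q.1.1 := by rw [← hqe]
      have h2 : i = q.1.2 := by rw [← hqe]
      refine ⟨h1.symm, fun hqp => hip ?_⟩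
      rw [h2, hqp]
    · rintro ⟨h1, h2⟩
      refine ⟨q.1.2, ⟨?_, ?_⟩, ?_⟩
      · intro h
        exact h2 (Subtype.ext (Prod.ext h1 h))
      · rw [← h1]; exact q.2.2
      · rw [← h1]
  set μ : F := (lam p)^2 with hμdef
  set c : F := (μ * ∏ q ∈ L, (μ - (lam q)^2))⁻¹ with hcdef
  set g : Polynomial F := ∏ q ∈ L, (Polynomial.X - Polynomial.C ((lam q)^2)) with hgdef
  set pol : Polynomial F := Polynomial.C c * (Polynomial.X * g) with hpoldef
  set w : ConstrA F a := Polynomial.aeval y pol with hwdef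
  have hwB : w ∈ ConstrB F a lam := by
    have h := Polynomial.aeval_algHom_apply (ConstrB F a lam).val
      (⟨y, hyB⟩ : ConstrB F a lam) pol
    rw [hwdef]
    have h2 : (ConstrB F a lam).val (⟨y, hyB⟩ : ConstrB F a lam) = y := rfl
    rw [h2] at h
    rw [h]
    exact ((Polynomial.aeval (⟨y, hyB⟩ : ConstrB F a lam)) pol).2
  have hwr : ∀ r : Idx a, w r = Polynomial.aeval (y r) pol := by
    intro r
    exact (Polynomial.aeval_algHom_apply
      (Pi.evalAlgHom F (fun q : Idx a => Matrix (Fin q.1.1) (Fin q.1.1) F) r) y pol).symm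
  have hgev : ∀ t : F, g.eval t = ∏ q ∈ L, (t - (lam q)^2) := by
    intro t
    rw [hgdef, Polynomial.eval_prod]
    exact Finset.prod_congr rfl fun q _ => by
      rw [Polynomial.eval_sub, Polynomial.eval_X, Polynomial.eval_C]
  have hwp : w p = e11 F p.1.1 := by
    rw [hwr, hy, if_pos rfl, hpoldef, _root_.map_mul, Polynomial.aeval_C,
      aeval_smul_e11 _ hN0, hgev]
    rw [Algebra.algebraMap_eq_smul_one, smul_mul_assoc, one_mul, smul_smul]
    have hne : μ * ∏ q ∈ L, (μ - (lam q)^2) ≠ 0 := by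
      apply mul_ne_zero
      · exact pow_ne_zero _ (hlam_ne p)
      · rw [Finset.prod_ne_zero_iff]
        intro q hq
        have h := (hL q).mp hq
        have hd := hlam p q h.1.symm (Ne.symm h.2)
        have hfact : μ - (lam q)^2 = (lam p - lam q) * (lam p + lam q) := by
          rw [hμdef]; ring
        rw [hfact]
        exact mul_ne_zero (sub_ne_zero.mpr hd.1)
          (fun h0 => hd.2 (eq_neg_of_add_eq_zero_left h0))
    rw [hcdef, ← hμdef, inv_mul_cancel₀ hne, one_smul]
  have hw0 : ∀ r : Idx a, r ≠ p → w r = 0 := by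
    intro r hr
    rw [hwr, hy]
    by_cases h1 : r.1.1 = p.1.1
    · have hr0 : 0 < r.1.1 := by have := r.2.1; omega
      rw [if_pos h1, hpoldef, _root_.map_mul, Polynomial.aeval_C, aeval_smul_e11 _ hr0, hgev]
      have hrL : r ∈ L := (hL r).mpr ⟨h1, hr⟩
      have hzero : ∏ q ∈ L, ((lam r)^2 - (lam q)^2) = 0 :=
        Finset.prod_eq_zero hrL (by ring)
      rw [hzero, mul_zero, zero_smul, mul_zero]
    · rw [if_neg h1, hpoldef, _root_.map_mul, _root_.map_mul, Polynomial.aeval_X, zero_mul, mul_zero]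
  have hfin : (Pi.single p 1 : ConstrA F a)
      = ∑ j : Fin p.1.1, (elemS F a) ^ (p.1.1 - (j:ℕ)) * w * (elemS F a) ^ ((j:ℕ)) := by
    funext r
    rw [Finset.sum_apply]
    by_cases hr : r = p
    · subst hr
      rw [Pi.single_eq_same]
      have hterm : ∀ j : Fin r.1.1, ((elemS F a) ^ (r.1.1 - (j:ℕ)) * w
          * (elemS F a) ^ ((j:ℕ))) r = Matrix.single j j (1:F) := by
        intro j
        rw [Pi.mul_apply, Pi.mul_apply, Pi.pow_apply, Pi.pow_apply, hwp]
        have hcomp : elemS F a r = cycMat F r.1.1 := rfl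
        rw [hcomp]
        exact cyc_e11_cyc r.1.1 hN0 j j
      rw [Finset.sum_congr rfl (fun j _ => hterm j)]
      exact (sum_std_diag _).symm
    · rw [Pi.single_eq_of_ne hr]
      symm
      apply Finset.sum_eq_zero
      intro j _
      rw [Pi.mul_apply, Pi.mul_apply, hw0 r hr, mul_zero, zero_mul]
  rw [hfin]
  exact sum_mem fun j _ => mul_mem (mul_mem (pow_mem hs _) hwB) (pow_mem hs _)

end SingleMem

set_option maxHeartbeats 8000000

/-- Let `P` be a maximal two-sided ideal of `B = F⟨e,σ⟩` such that `B/P` is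
finite-dimensional over `F` and such that `P` does not contain the ideal `A₀` of finitely
supported elements (recall `A₀ ⊆ B`). Then `P` is the kernel of the restriction to `B` of
one of the projections `θ_{n,i} : A → M_n(F)`; in particular (since this restriction is
surjective) `B/P ≅ M_n(F)`. -/
theorem stmt_15 (F : Type*) [Field F] [IsAlgClosed F] (a : ℕ → ℕ) (lam : Idx a → F)
    (hlam_ne : ∀ p, lam p ≠ 0)
    (hlam : ∀ p q : Idx a, p.1.1 = q.1.1 → p ≠ q → lam p ≠ lam q ∧ lam p ≠ -lam q)
    (P : Ideal ↥(ConstrB F a lam))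
    (hP2 : ∀ x ∈ P, ∀ b : ↥(ConstrB F a lam), x * b ∈ P)
    (hPne : P ≠ ⊤)
    (hPmax : ∀ Q : Ideal ↥(ConstrB F a lam),
      (∀ x ∈ Q, ∀ b : ↥(ConstrB F a lam), x * b ∈ Q) → P < Q → Q = ⊤)
    (hfin : FiniteDimensional F (↥(ConstrB F a lam) ⧸ P.restrictScalars F))
    (hA0 : ¬ ∀ b : ↥(ConstrB F a lam),
      {p : Idx a | (b : ConstrA F a) p ≠ 0}.Finite → b ∈ P) :
    ∃ p : Idx a,
      P = RingHom.ker
        (((Pi.evalAlgHom F (fun q : Idx a => Matrix (Fin q.1.1) (Fin q.1.1) F) p).comp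
          (ConstrB F a lam).val).toRingHom) ∧
      Function.Surjective
        ((Pi.evalAlgHom F (fun q : Idx a => Matrix (Fin q.1.1) (Fin q.1.1) F) p).comp
          (ConstrB F a lam).val) := by
  classical
  push_neg at hA0
  obtain ⟨b, hbfin, hbP⟩ := hA0
  have hsingle : ∀ q : Idx a, (Pi.single q 1 : ConstrA F a) ∈ ConstrB F a lam :=
    single_one_mem a lam hlam_ne hlam
  set s : (q : Idx a) → ↥(ConstrB F a lam) := fun q => ⟨Pi.single q 1, hsingle q⟩ with hsdef
  set T := hbfin.toFinset with hTdef
  have hdecomp : b = ∑ q ∈ T, s q * b := by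
    apply Subtype.ext
    have hco : ((∑ q ∈ T, s q * b : ↥(ConstrB F a lam)) : ConstrA F a)
        = ∑ q ∈ T, (Pi.single q 1 : ConstrA F a) * (b : ConstrA F a) := by
      rw [AddSubmonoidClass.coe_finset_sum]
      exact Finset.sum_congr rfl fun q _ => by rw [MulMemClass.coe_mul]
    rw [hco]
    funext r
    rw [Finset.sum_apply]
    by_cases hr : r ∈ T
    · rw [Finset.sum_eq_single_of_mem r hr]
      · rw [Pi.mul_apply, Pi.single_eq_same, one_mul]
      · intro q _ hne
        rw [Pi.mul_apply, Pi.single_eq_of_ne (Ne.symm hne), zero_mul]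
    · rw [Finset.sum_eq_zero]
      · have : r ∉ {p : Idx a | (b : ConstrA F a) p ≠ 0} := by
          rw [← hbfin.mem_toFinset]; exact hr
        simpa using this
      · intro q hq
        rw [Pi.mul_apply, Pi.single_eq_of_ne (fun h => hr (by rw [h]; exact hq)), zero_mul]
  have hex : ∃ q ∈ T, s q ∉ P := by
    by_contra h
    push_neg at h
    exact hbP (hdecomp ▸ sum_mem fun q hq => hP2 _ (h q hq) b)
  obtain ⟨p, _, hspP⟩ := hex
  set θ := ((Pi.evalAlgHom F (fun q : Idx a => Matrix (Fin q.1.1) (Fin q.1.1) F) p).comp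
    (ConstrB F a lam).val) with hθdef
  have hp0 : 0 < p.1.1 := by have := p.2.1; omega
  have hsurj : Function.Surjective θ := by
    rw [← AlgHom.range_eq_top, hθdef, AlgHom.range_comp, Subalgebra.range_val]
    show Subalgebra.map _ (Algebra.adjoin F {elemE a lam, elemS F a}) = ⊤
    rw [AlgHom.map_adjoin, Set.image_pair]
    have h1 : (Pi.evalAlgHom F (fun q : Idx a => Matrix (Fin q.1.1) (Fin q.1.1) F) p)
        (elemE a lam) = lam p • e11 F p.1.1 := rfl
    have h2 : (Pi.evalAlgHom F (fun q : Idx a => Matrix (Fin q.1.1) (Fin q.1.1) F) p)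
        (elemS F a) = cycMat F p.1.1 := rfl
    rw [h1, h2]
    exact adjoin_e11_cyc_top p.1.1 hp0 (hlam_ne p)
  have hθapp : ∀ k : ↥(ConstrB F a lam), θ k = (k : ConstrA F a) p := fun _ => rfl
  have hcentral : ∀ t : ↥(ConstrB F a lam), t * s p = s p * t := by
    intro t
    apply Subtype.ext
    rw [MulMemClass.coe_mul, MulMemClass.coe_mul]
    funext r
    rw [Pi.mul_apply, Pi.mul_apply]
    show (t : ConstrA F a) r * (Pi.single p 1 : ConstrA F a) r
        = (Pi.single p 1 : ConstrA F a) r * (t : ConstrA F a) r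
    by_cases hr : r = p
    · subst hr
      rw [Pi.single_eq_same, mul_one, one_mul]
    · rw [Pi.single_eq_of_ne hr, mul_zero, zero_mul]
  have hker_sub : ∀ k : ↥(ConstrB F a lam), θ k = 0 → k ∈ P := by
    intro k hk
    have hkp : (k : ConstrA F a) p = 0 := by rw [← hθapp]; exact hk
    have hk0 : k * s p = 0 := by
      apply Subtype.ext
      rw [MulMemClass.coe_mul, ZeroMemClass.coe_zero]
      funext r
      rw [Pi.mul_apply]
      show (k : ConstrA F a) r * (Pi.single p 1 : ConstrA F a) r = 0
      by_cases hr : r = p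
      · subst hr
        rw [hkp, zero_mul]
      · rw [Pi.single_eq_of_ne hr, mul_zero]
    let Q : Ideal ↥(ConstrB F a lam) :=
      { carrier := {x | ∃ u ∈ P, ∃ t : ↥(ConstrB F a lam), x = u + t * s p}
        add_mem' := by
          rintro x y ⟨u, hu, t, rfl⟩ ⟨u', hu', t', rfl⟩
          exact ⟨u + u', add_mem hu hu', t + t', by rw [add_mul]; abel⟩
        zero_mem' := ⟨0, zero_mem _, 0, by rw [zero_mul, add_zero]⟩
        smul_mem' := by
          rintro c x ⟨u, hu, t, rfl⟩
          refine ⟨c * u, Ideal.mul_mem_left P c hu, c * t, ?_⟩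
          simp only [smul_eq_mul]
          rw [mul_add, ← mul_assoc] }
    have hmemQ : ∀ x, x ∈ Q ↔ ∃ u ∈ P, ∃ t : ↥(ConstrB F a lam), x = u + t * s p := by
      intro x; exact Iff.rfl
    have hQtop : Q = ⊤ := by
      apply hPmax
      · rintro x hx t
        obtain ⟨u, hu, t', rfl⟩ := (hmemQ x).mp hx
        refine (hmemQ _).mpr ⟨u * t, hP2 _ hu _, t' * t, ?_⟩
        rw [add_mul, mul_assoc, ← hcentral t, ← mul_assoc]
      · refine lt_of_le_of_ne
          (fun x hx => (hmemQ x).mpr ⟨x, hx, 0, by rw [zero_mul, add_zero]⟩)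
          fun h => hspP ?_
        rw [h]
        exact (hmemQ _).mpr ⟨0, zero_mem _, 1, by rw [one_mul, zero_add]⟩
    have h1 : (1 : ↥(ConstrB F a lam)) ∈ Q := by
      rw [hQtop]; trivial
    obtain ⟨u, hu, r, huv⟩ := (hmemQ _).mp h1
    have hkku : k = k * u := by
      have h2 : k * (r * s p) = 0 := by
        rw [hcentral r, ← mul_assoc, hk0, zero_mul]
      calc k = k * 1 := (mul_one k).symm
        _ = k * u + k * (r * s p) := by rw [huv, mul_add]
        _ = k * u := by rw [h2, add_zero]
    rw [hkku]
    exact Ideal.mul_mem_left P k hu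
  have hsub : ∀ z ∈ P, θ z = 0 := by
    intro z hz
    by_contra hM
    have hent : ∃ u v, θ z u v ≠ 0 := by
      by_contra h
      push_neg at h
      exact hM (by ext u v; simpa using h u v)
    obtain ⟨u, v, huv⟩ := hent
    choose cf hcf using fun k : Fin p.1.1 => hsurj (Matrix.single k u ((θ z u v)⁻¹))
    choose df hdf using fun k : Fin p.1.1 => hsurj (Matrix.single v k (1:F))
    set Z : ↥(ConstrB F a lam) := ∑ k : Fin p.1.1, cf k * z * df k with hZdef
    have hZP : Z ∈ P := by
      refine sum_mem fun k _ => ?_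
      rw [mul_assoc]
      exact Ideal.mul_mem_left P (cf k) (hP2 _ hz _)
    have hθZ : θ Z = 1 := by
      rw [hZdef, map_sum]
      have hterm : ∀ k : Fin p.1.1, θ (cf k * z * df k) = Matrix.single k k (1:F) := by
        intro k
        rw [_root_.map_mul, _root_.map_mul, hcf, hdf, std_mul_mul, mul_one, inv_mul_cancel₀ huv]
      rw [Finset.sum_congr rfl fun k _ => hterm k]
      exact sum_std_diag _
    have h1P : (1 : ↥(ConstrB F a lam)) ∈ P := by
      have h1z : (1 - Z) ∈ P := hker_sub _ (by rw [map_sub, _root_.map_one, hθZ, sub_self])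
      have := add_mem h1z hZP
      rwa [sub_add_cancel] at this
    exact hPne ((Ideal.eq_top_iff_one P).mpr h1P)
  refine ⟨p, ?_, hsurj⟩
  ext z
  rw [RingHom.mem_ker]
  constructor
  · intro hz
    exact hsub z hz
  · intro hz
    exact hker_sub z hz
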